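/- Let S be a standard symmetric random walk, T ≥ 1, μ a centered probability measure on ℤ∩[−T,T], and τ ≤ T any stopping time (possibly randomized via an independent uniform variable in F₀) with S_τ ∼ μ. Then for every t ≤ T and x ∈ ℤ, U_{S_{τ∧t}}(x) ≤ U_t(x), where U_t are the evolutional functions of μ. -/

import Mathlib

open MeasureTheory ProbabilityTheory

/-- A probability mass function on the integers with finite first moment and mean zero. -/
def IsCenteredPMF (μ : ℤ → ℝ) : Prop :=
  (∀ y, 0 ≤ μ y) ∧ HasSum μ 1 ∧ Summable (fun y : ℤ => |(y : ℝ)| * μ y) ∧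
    (∑' y : ℤ, (y : ℝ) * μ y) = 0

/-- The potential of a measure on ℤ. -/
noncomputable def potential (μ : ℤ → ℝ) (x : ℤ) : ℝ :=
  ∑' y : ℤ, |(x : ℝ) - (y : ℝ)| * μ y

/-- The evolutional functions of μ. -/
noncomputable def evol (μ : ℤ → ℝ) : ℕ → ℤ → ℝ
  | 0, x => |(x : ℝ)|
  | t + 1, x => min ((evol μ t (x - 1) + evol μ t (x + 1)) / 2) (potential μ x)

/-- Decomposition of the integral of a function of a finitely supported integer random
variable over an event, together with integrability. -/
lemma aux_decomp {Ω : Type*} [MeasurableSpace Ω] (P : Measure Ω) [IsFiniteMeasure P]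
    (V : Ω → ℤ) (hV : Measurable V) (R : Finset ℤ) (hR : ∀ᵐ ω ∂P, V ω ∈ R)
    (h : ℤ → ℝ) :
    Integrable (fun ω => h (V ω)) P ∧
      ∀ E : Set Ω, MeasurableSet E →
        ∫ ω in E, h (V ω) ∂P = ∑ z ∈ R, h z * (P (E ∩ V ⁻¹' {z})).toReal := by
  set g : Ω → ℝ := fun ω => ∑ z ∈ R, Set.indicator (V ⁻¹' {z}) (fun _ => h z) ω with hg
  have hae : (fun ω => h (V ω)) =ᵐ[P] g := by
    filter_upwards [hR] with ω hω
    rw [hg]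
    simp only
    rw [Finset.sum_eq_single (V ω)]
    · simp [Set.indicator_of_mem, Set.mem_preimage]
    · intro b _ hb
      apply Set.indicator_of_notMem
      simp [hb.symm]
    · intro h'; exact absurd hω h'
  have hgint : Integrable g P :=
    integrable_finset_sum _ fun z _ =>
      (integrable_const (h z)).indicator (hV (measurableSet_singleton z))
  refine ⟨hgint.congr hae.symm, fun E hE => ?_⟩
  rw [integral_congr_ae (ae_restrict_of_ae hae)]
  rw [hg]
  rw [integral_finset_sum _ fun z _ =>
      ((integrable_const (h z)).indicator (hV (measurableSet_singleton z))).integrableOn]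
  refine Finset.sum_congr rfl fun z _ => ?_
  rw [setIntegral_indicator (hV (measurableSet_singleton z)), setIntegral_const]
  rw [smul_eq_mul, mul_comm]
  rfl

/-- Any (possibly randomized, via the `F₀`-measurable uniform variable ξ independent of the
walk) stopping time `τ ≤ T` embedding μ satisfies `U_{S_{τ∧t}}(x) ≤ U_t(x)` for `t ≤ T`. -/
theorem stmt10 {Ω : Type*} {m0 : MeasurableSpace Ω} (P : Measure Ω) [IsProbabilityMeasure P]
    (F : Filtration ℕ m0)
    (X : ℕ → Ω → ℤ) (ξ : Ω → ℝ)
    (hmeas : ∀ i, Measurable (X i))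
    (hadapted : ∀ i, Measurable[F (i + 1)] (X i))
    (hindep : iIndepFun X P)
    (hindepF : ∀ i, Indep (MeasurableSpace.comap (X i) inferInstance) (F i) P)
    (hdist : ∀ i, P (X i ⁻¹' {1}) = 1/2 ∧ P (X i ⁻¹' {-1}) = 1/2)
    (hξmeas : Measurable[F 0] ξ)
    (hξunif : P.map ξ = MeasureTheory.volume.restrict (Set.Icc (0:ℝ) 1))
    (hξindep : IndepFun ξ (fun ω (i : ℕ) => X i ω) P)
    (S : ℕ → Ω → ℤ) (hS : ∀ t ω, S t ω = ∑ i ∈ Finset.range t, X i ω)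
    (T : ℕ) (hT : 1 ≤ T)
    (μ : ℤ → ℝ) (hμ : IsCenteredPMF μ) (hsupp : ∀ z : ℤ, μ z ≠ 0 → |z| ≤ (T : ℤ))
    (τ : Ω → ℕ) (hτ : IsStoppingTime F (fun ω => (τ ω : WithTop ℕ))) (hτT : ∀ ω, τ ω ≤ T)
    (hlaw : ∀ z : ℤ, (P {ω | S (τ ω) ω = z}).toReal = μ z) :
    ∀ t : ℕ, t ≤ T → ∀ x : ℤ,
      ∫ ω, |(x : ℝ) - (S (min (τ ω) t) ω : ℝ)| ∂P ≤ evol μ t x := by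
  -- basic measurability facts
  have hSm : ∀ t, Measurable[F t] (fun ω => ∑ i ∈ Finset.range t, X i ω) := by
    intro t
    apply Finset.measurable_sum
    intro i hi
    have hi' : i + 1 ≤ t := Finset.mem_range.mp hi
    exact (hadapted i).mono (F.mono hi') le_rfl
  have hSmeas : ∀ s : ℕ, Measurable (fun ω => ∑ i ∈ Finset.range s, X i ω) :=
    fun s => (hSm s).mono (F.le s) le_rfl
  have hτi : ∀ i : ℕ, MeasurableSet {ω | i < τ ω} := by
    intro i
    have : {ω | i < τ ω} = {ω | τ ω ≤ i}ᶜ := by ext ω; simp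
    rw [this]
    have h : MeasurableSet[F i] {ω | τ ω ≤ i} := by
      rw [show {ω | τ ω ≤ i} = {ω | (τ ω : WithTop ℕ) ≤ (i : WithTop ℕ)} by ext ω; simp]
      exact hτ i
    exact (F.le i _ h).compl
  -- almost surely all steps are ±1
  have hGc : P {ω | ∀ i, X i ω = 1 ∨ X i ω = -1}ᶜ = 0 := by
    have : {ω | ∀ i, X i ω = 1 ∨ X i ω = -1}ᶜ = ⋃ i, (X i ⁻¹' {1} ∪ X i ⁻¹' {-1})ᶜ := by
      ext ω; simp [Set.mem_iUnion, not_forall]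
    rw [this]
    apply measure_iUnion_null
    intro i
    have hd : Disjoint (X i ⁻¹' {1}) (X i ⁻¹' {-1}) := by
      apply Set.disjoint_left.mpr
      intro ω h1 h2
      simp only [Set.mem_preimage, Set.mem_singleton_iff] at h1 h2
      omega
    have hu : P (X i ⁻¹' {1} ∪ X i ⁻¹' {-1}) = 1 := by
      rw [measure_union hd (hmeas i (measurableSet_singleton _)), (hdist i).1, (hdist i).2]
      rw [ENNReal.add_halves]
    rw [measure_compl (((hmeas i (measurableSet_singleton _))).union
        (hmeas i (measurableSet_singleton _))) (by simp), hu, measure_univ, tsub_self]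
  have hGae : ∀ᵐ ω ∂P, ∀ i, X i ω = 1 ∨ X i ω = -1 := by
    rw [ae_iff]; exact hGc
  -- representation of the stopped sum
  have hYrep : ∀ (t : ℕ) (ω : Ω), (∑ i ∈ Finset.range (min (τ ω) t), X i ω) =
      ∑ i ∈ Finset.range t, if i < τ ω then X i ω else 0 := by
    intro t ω
    rw [Finset.sum_ite, Finset.sum_const_zero, add_zero]
    congr 1
    ext i
    simp [Nat.lt_min, and_comm]
  have hYmeas : ∀ t : ℕ, Measurable fun ω => ∑ i ∈ Finset.range (min (τ ω) t), X i ω := by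
    intro t
    have : (fun ω => ∑ i ∈ Finset.range (min (τ ω) t), X i ω)
        = fun ω => ∑ i ∈ Finset.range t, if i < τ ω then X i ω else 0 := funext (hYrep t)
    rw [this]
    exact Finset.measurable_sum _ fun i _ => Measurable.ite (hτi i) (hmeas i) measurable_const
  have hYbd : ∀ t : ℕ, ∀ᵐ ω ∂P, (∑ i ∈ Finset.range (min (τ ω) t), X i ω) ∈
      Finset.Icc (-(t:ℤ)) (t:ℤ) := by
    intro t
    filter_upwards [hGae] with ω hω
    rw [Finset.mem_Icc, ← abs_le, hYrep]
    calc |∑ i ∈ Finset.range t, if i < τ ω then X i ω else 0|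
        ≤ ∑ i ∈ Finset.range t, |if i < τ ω then X i ω else 0| :=
          Finset.abs_sum_le_sum_abs _ _
      _ ≤ ∑ i ∈ Finset.range t, 1 := by
          apply Finset.sum_le_sum
          intro i _
          rcases (hω i) with h | h <;> split <;> simp [h]
      _ = (t : ℤ) := by simp
  have hSbd : ∀ t : ℕ, ∀ᵐ ω ∂P, (∑ i ∈ Finset.range t, X i ω) ∈
      Finset.Icc (-(t:ℤ)) (t:ℤ) := by
    intro t
    filter_upwards [hGae] with ω hω
    rw [Finset.mem_Icc, ← abs_le]
    calc |∑ i ∈ Finset.range t, X i ω| ≤ ∑ i ∈ Finset.range t, |X i ω| :=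
          Finset.abs_sum_le_sum_abs _ _
      _ ≤ ∑ i ∈ Finset.range t, 1 := by
          apply Finset.sum_le_sum
          intro i _
          rcases (hω i) with h | h <;> simp [h]
      _ = (t : ℤ) := by simp
  -- integrability
  have hIntY : ∀ (d : ℝ) (s : ℕ),
      Integrable (fun ω => |d - ((∑ i ∈ Finset.range (min (τ ω) s), X i ω : ℤ) : ℝ)|) P :=
    fun d s => (aux_decomp P _ (hYmeas s) _ (hYbd s) (fun z => |d - (z:ℝ)|)).1
  have hIntS : ∀ (d : ℝ) (s : ℕ),
      Integrable (fun ω => |d - ((∑ i ∈ Finset.range s, X i ω : ℤ) : ℝ)|) P :=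
    fun d s => (aux_decomp P _ (hSmeas s) _ (hSbd s) (fun z => |d - (z:ℝ)|)).1
  -- the one-step evolution identity
  have key : ∀ (t : ℕ) (c : ℝ),
      ∫ ω, |c - ((∑ i ∈ Finset.range (min (τ ω) (t+1)), X i ω : ℤ) : ℝ)| ∂P
      = (∫ ω in {ω | t < τ ω}ᶜ, |c - ((∑ i ∈ Finset.range (min (τ ω) t), X i ω : ℤ) : ℝ)| ∂P)
        + ((∫ ω in {ω | t < τ ω}, |(c-1) - ((∑ i ∈ Finset.range (min (τ ω) t), X i ω : ℤ) : ℝ)| ∂P)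
           + (∫ ω in {ω | t < τ ω}, |(c+1) - ((∑ i ∈ Finset.range (min (τ ω) t), X i ω : ℤ) : ℝ)| ∂P)) / 2 := by
    intro t c
    set A := {ω | t < τ ω} with hAdef
    have hAF : MeasurableSet[F t] A := by
      have : A = {ω | τ ω ≤ t}ᶜ := by ext ω; simp [hAdef]
      have h : MeasurableSet[F t] {ω | τ ω ≤ t} := by
        rw [show {ω | τ ω ≤ t} = {ω | (τ ω : WithTop ℕ) ≤ (t : WithTop ℕ)} by ext ω; simp]
        exact hτ t
      rw [this]; exact h.compl
    have hAm : MeasurableSet A := F.le t _ hAF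
    have e0 := (integral_add_compl hAm (hIntY c (t+1))).symm
    have e2 : ∫ ω in Aᶜ, |c - ((∑ i ∈ Finset.range (min (τ ω) (t+1)), X i ω : ℤ) : ℝ)| ∂P
        = ∫ ω in Aᶜ, |c - ((∑ i ∈ Finset.range (min (τ ω) t), X i ω : ℤ) : ℝ)| ∂P := by
      apply setIntegral_congr_fun hAm.compl
      intro ω hω
      have hωt : τ ω ≤ t := by simpa [hAdef] using hω
      simp only
      rw [min_eq_left hωt, min_eq_left (hωt.trans (Nat.le_succ t))]
    have e3 : ∫ ω in A, |c - ((∑ i ∈ Finset.range (min (τ ω) (t+1)), X i ω : ℤ) : ℝ)| ∂P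
        = ∫ ω in A, |c - ((∑ i ∈ Finset.range (t+1), X i ω : ℤ) : ℝ)| ∂P := by
      apply setIntegral_congr_fun hAm
      intro ω hω
      have hωt : t < τ ω := hω
      simp only
      rw [min_eq_right hωt]
    have hU1m : MeasurableSet (X t ⁻¹' {1}) := hmeas t (measurableSet_singleton _)
    have hU2m : MeasurableSet (X t ⁻¹' {-1}) := hmeas t (measurableSet_singleton _)
    have hdisj : Disjoint (A ∩ X t ⁻¹' {1}) (A ∩ X t ⁻¹' {-1}) := by
      apply Set.disjoint_left.mpr
      rintro ω ⟨-, h1⟩ ⟨-, h2⟩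
      simp only [Set.mem_preimage, Set.mem_singleton_iff] at h1 h2
      omega
    have hAsplit : A =ᵐ[P] (((A ∩ X t ⁻¹' {1}) ∪ (A ∩ X t ⁻¹' {-1}) : Set Ω)) := by
      filter_upwards [hGae] with ω hω
      have : ω ∈ A ↔ ω ∈ ((A ∩ X t ⁻¹' {1}) ∪ (A ∩ X t ⁻¹' {-1})) := by
        constructor
        · intro hA
          rcases hω t with h | h
          · exact Or.inl ⟨hA, h⟩
          · exact Or.inr ⟨hA, h⟩
        · rintro (⟨h, -⟩ | ⟨h, -⟩) <;> exact h
      exact eq_iff_iff.mpr this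
    have e4 : ∫ ω in A, |c - ((∑ i ∈ Finset.range (t+1), X i ω : ℤ) : ℝ)| ∂P
        = (∫ ω in A ∩ X t ⁻¹' {1}, |c - ((∑ i ∈ Finset.range (t+1), X i ω : ℤ) : ℝ)| ∂P)
          + ∫ ω in A ∩ X t ⁻¹' {-1}, |c - ((∑ i ∈ Finset.range (t+1), X i ω : ℤ) : ℝ)| ∂P := by
      rw [setIntegral_congr_set hAsplit,
        setIntegral_union hdisj (hAm.inter hU2m) ((hIntS c (t+1)).integrableOn)
          ((hIntS c (t+1)).integrableOn)]
    have e51 : ∫ ω in A ∩ X t ⁻¹' {1}, |c - ((∑ i ∈ Finset.range (t+1), X i ω : ℤ) : ℝ)| ∂P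
        = ∫ ω in A ∩ X t ⁻¹' {1}, |(c - 1) - ((∑ i ∈ Finset.range t, X i ω : ℤ) : ℝ)| ∂P := by
      apply setIntegral_congr_fun (hAm.inter hU1m)
      rintro ω ⟨-, hε⟩
      simp only [Set.mem_preimage, Set.mem_singleton_iff] at hε
      simp only
      rw [Finset.sum_range_succ, hε]
      push_cast
      congr 1
      ring
    have e52 : ∫ ω in A ∩ X t ⁻¹' {-1}, |c - ((∑ i ∈ Finset.range (t+1), X i ω : ℤ) : ℝ)| ∂P
        = ∫ ω in A ∩ X t ⁻¹' {-1}, |(c + 1) - ((∑ i ∈ Finset.range t, X i ω : ℤ) : ℝ)| ∂P := by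
      apply setIntegral_congr_fun (hAm.inter hU2m)
      rintro ω ⟨-, hε⟩
      simp only [Set.mem_preimage, Set.mem_singleton_iff] at hε
      simp only
      rw [Finset.sum_range_succ, hε]
      push_cast
      congr 1
      ring
    have e6 : ∀ (ε : ℤ), P (X t ⁻¹' {ε}) = 1/2 → ∀ d : ℝ,
        ∫ ω in A ∩ X t ⁻¹' {ε}, |d - ((∑ i ∈ Finset.range t, X i ω : ℤ) : ℝ)| ∂P
        = (1/2) * ∫ ω in A, |d - ((∑ i ∈ Finset.range t, X i ω : ℤ) : ℝ)| ∂P := by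
      intro ε hε d
      have hd := (aux_decomp P _ (hSmeas t) (Finset.Icc (-(t:ℤ)) t) (hSbd t)
        (fun z => |d - (z:ℝ)|)).2
      rw [hd _ (hAm.inter (hmeas t (measurableSet_singleton ε))), hd _ hAm, Finset.mul_sum]
      refine Finset.sum_congr rfl fun z _ => ?_
      have hset : A ∩ X t ⁻¹' {ε} ∩ (fun ω => ∑ i ∈ Finset.range t, X i ω) ⁻¹' {z}
          = X t ⁻¹' {ε} ∩ (A ∩ (fun ω => ∑ i ∈ Finset.range t, X i ω) ⁻¹' {z}) := by
        rw [Set.inter_comm A, Set.inter_assoc]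
      rw [hset]
      have hmul := (Indep_iff _ _ P).mp (hindepF t) (X t ⁻¹' {ε})
        (A ∩ (fun ω => ∑ i ∈ Finset.range t, X i ω) ⁻¹' {z})
        ⟨{ε}, measurableSet_singleton ε, rfl⟩
        (hAF.inter ((hSm t) (measurableSet_singleton z)))
      rw [hmul, hε, ENNReal.toReal_mul]
      have : ((1:ENNReal)/2).toReal = (1:ℝ)/2 := by simp [ENNReal.toReal_div]
      rw [this]
      ring
    have e7 : ∀ d : ℝ, ∫ ω in A, |d - ((∑ i ∈ Finset.range t, X i ω : ℤ) : ℝ)| ∂P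
        = ∫ ω in A, |d - ((∑ i ∈ Finset.range (min (τ ω) t), X i ω : ℤ) : ℝ)| ∂P := by
      intro d
      apply setIntegral_congr_fun hAm
      intro ω hω
      have hωt : t < τ ω := hω
      simp only
      rw [min_eq_right hωt.le]
    rw [e0, e2, e3, e4, e51, e52, e6 1 (hdist t).1 (c - 1), e6 (-1) (hdist t).2 (c + 1),
      e7 (c - 1), e7 (c + 1)]
    ring
  -- pointwise convexity of the absolute value
  have ptwise : ∀ a : ℝ, |a| ≤ (|a - 1| + |a + 1|) / 2 := by
    intro a
    have h1 := abs_add_le (a - 1) (a + 1)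
    have h2 : |a - 1 + (a + 1)| = 2 * |a| := by
      rw [show a - 1 + (a + 1) = 2 * a by ring, abs_mul]
      simp [abs_of_nonneg]
    linarith
  have hsetle : ∀ (t : ℕ) (c : ℝ) (E : Set Ω), MeasurableSet E →
      ∫ ω in E, |c - ((∑ i ∈ Finset.range (min (τ ω) t), X i ω : ℤ) : ℝ)| ∂P
      ≤ ((∫ ω in E, |(c-1) - ((∑ i ∈ Finset.range (min (τ ω) t), X i ω : ℤ) : ℝ)| ∂P)
         + (∫ ω in E, |(c+1) - ((∑ i ∈ Finset.range (min (τ ω) t), X i ω : ℤ) : ℝ)| ∂P)) / 2 := by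
    intro t c E hE
    have hle : ∫ ω in E, |c - ((∑ i ∈ Finset.range (min (τ ω) t), X i ω : ℤ) : ℝ)| ∂P
        ≤ ∫ ω in E, (|(c-1) - ((∑ i ∈ Finset.range (min (τ ω) t), X i ω : ℤ) : ℝ)|
            + |(c+1) - ((∑ i ∈ Finset.range (min (τ ω) t), X i ω : ℤ) : ℝ)|) / 2 ∂P := by
      apply setIntegral_mono_on (hIntY c t).integrableOn
        (((hIntY (c-1) t).add (hIntY (c+1) t)).div_const 2).integrableOn hE
      intro ω _
      have := ptwise (c - ((∑ i ∈ Finset.range (min (τ ω) t), X i ω : ℤ) : ℝ))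
      calc |c - ((∑ i ∈ Finset.range (min (τ ω) t), X i ω : ℤ) : ℝ)|
          ≤ (|c - ((∑ i ∈ Finset.range (min (τ ω) t), X i ω : ℤ) : ℝ) - 1|
            + |c - ((∑ i ∈ Finset.range (min (τ ω) t), X i ω : ℤ) : ℝ) + 1|) / 2 := this
        _ = (|(c-1) - ((∑ i ∈ Finset.range (min (τ ω) t), X i ω : ℤ) : ℝ)|
            + |(c+1) - ((∑ i ∈ Finset.range (min (τ ω) t), X i ω : ℤ) : ℝ)|) / 2 := by
            congr 2 <;> congr 1 <;> ring
    refine hle.trans (le_of_eq ?_)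
    rw [integral_div, integral_add (hIntY (c-1) t).integrableOn (hIntY (c+1) t).integrableOn]
  -- monotonicity in t
  have mono : ∀ (t : ℕ) (c : ℝ),
      (∫ ω, |c - ((∑ i ∈ Finset.range (min (τ ω) t), X i ω : ℤ) : ℝ)| ∂P)
      ≤ ∫ ω, |c - ((∑ i ∈ Finset.range (min (τ ω) (t+1)), X i ω : ℤ) : ℝ)| ∂P := by
    intro t c
    rw [key t c, ← integral_add_compl (hτi t) (hIntY c t)]
    have h1 := hsetle t c _ (hτi t)
    linarith
  -- the step inequality
  have stepA : ∀ (t : ℕ) (c : ℝ),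
      (∫ ω, |c - ((∑ i ∈ Finset.range (min (τ ω) (t+1)), X i ω : ℤ) : ℝ)| ∂P)
      ≤ ((∫ ω, |(c-1) - ((∑ i ∈ Finset.range (min (τ ω) t), X i ω : ℤ) : ℝ)| ∂P)
         + ∫ ω, |(c+1) - ((∑ i ∈ Finset.range (min (τ ω) t), X i ω : ℤ) : ℝ)| ∂P) / 2 := by
    intro t c
    rw [key t c, ← integral_add_compl (hτi t) (hIntY (c-1) t),
      ← integral_add_compl (hτi t) (hIntY (c+1) t)]
    have h1 := hsetle t c _ (hτi t).compl
    linarith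
  -- chaining monotonicity
  have chain : ∀ (c : ℝ) (k t : ℕ),
      (∫ ω, |c - ((∑ i ∈ Finset.range (min (τ ω) t), X i ω : ℤ) : ℝ)| ∂P)
      ≤ ∫ ω, |c - ((∑ i ∈ Finset.range (min (τ ω) (t + k)), X i ω : ℤ) : ℝ)| ∂P := by
    intro c k
    induction k with
    | zero => intro t; exact le_refl _
    | succ k ih => intro t; exact (ih t).trans (mono (t + k) c)
  -- identification of the terminal integral with the potential
  have pot : ∀ x : ℤ, ∫ ω, |(x:ℝ) - ((∑ i ∈ Finset.range (min (τ ω) T), X i ω : ℤ) : ℝ)| ∂P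
      = potential μ x := by
    intro x
    have hd := (aux_decomp P _ (hYmeas T) _ (hYbd T) (fun z => |(x:ℝ) - (z:ℝ)|)).2
      Set.univ MeasurableSet.univ
    rw [← setIntegral_univ (μ := P), hd]
    have hterm : ∀ z : ℤ,
        (P (Set.univ ∩ (fun ω => ∑ i ∈ Finset.range (min (τ ω) T), X i ω) ⁻¹' {z})).toReal
        = μ z := by
      intro z
      rw [Set.univ_inter, ← hlaw z]
      have : ((fun ω => ∑ i ∈ Finset.range (min (τ ω) T), X i ω) ⁻¹' {z})
          = {ω | S (τ ω) ω = z} := by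
        ext ω
        simp [hS, min_eq_left (hτT ω)]
      rw [this]
    have hvanish : ∀ z ∉ Finset.Icc (-(T:ℤ)) (T:ℤ), |(x:ℝ) - (z:ℝ)| * μ z = 0 := by
      intro z hz
      have : μ z = 0 := by
        by_contra h
        exact hz (Finset.mem_Icc.mpr (abs_le.mp (hsupp z h)))
      rw [this, mul_zero]
    rw [show potential μ x = ∑ z ∈ Finset.Icc (-(T:ℤ)) (T:ℤ), |(x:ℝ) - (z:ℝ)| * μ z from
      tsum_eq_sum hvanish]
    exact Finset.sum_congr rfl fun z _ => by rw [hterm z]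
  -- main induction
  intro t
  induction t with
  | zero =>
    intro _ x
    simp only [hS, Nat.min_zero, Finset.range_zero, Finset.sum_empty, Int.cast_zero, sub_zero]
    rw [integral_const]
    simp [evol]
  | succ t ih =>
    intro ht x
    simp only [hS] at ih ⊢
    have ht' : t ≤ T := Nat.le_of_succ_le ht
    show _ ≤ min ((evol μ t (x - 1) + evol μ t (x + 1)) / 2) (potential μ x)
    refine le_min ?_ ?_
    · have h1 := stepA t (x : ℝ)
      have hc1 : ((x:ℝ) - 1) = (((x - 1 : ℤ) : ℤ) : ℝ) := by push_cast; ring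
      have hc2 : ((x:ℝ) + 1) = (((x + 1 : ℤ) : ℤ) : ℝ) := by push_cast; ring
      have h2 := ih ht' (x - 1)
      have h3 := ih ht' (x + 1)
      rw [← hc1] at h2
      rw [← hc2] at h3
      calc ∫ ω, |(x:ℝ) - ((∑ i ∈ Finset.range (min (τ ω) (t+1)), X i ω : ℤ) : ℝ)| ∂P
          ≤ ((∫ ω, |((x:ℝ)-1) - ((∑ i ∈ Finset.range (min (τ ω) t), X i ω : ℤ) : ℝ)| ∂P)
             + ∫ ω, |((x:ℝ)+1) - ((∑ i ∈ Finset.range (min (τ ω) t), X i ω : ℤ) : ℝ)| ∂P) / 2 := h1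
        _ ≤ (evol μ t (x - 1) + evol μ t (x + 1)) / 2 := by linarith
    · have h1 := chain (x : ℝ) (T - (t + 1)) (t + 1)
      rw [Nat.add_sub_cancel' ht] at h1
      exact h1.trans (le_of_eq (pot x))
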